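/- Let μ be a Borel measure on ℝ and suppose there is a Borel set A with μ(A) > 0 and a sequence (tₙ) of nonzero reals converging to 0 such that μ(A + tₙ) → 0. Then μ fails the Steinhaus property. -/

import Mathlib

open MeasureTheory Set Pointwise Filter
open scoped ENNReal

def HasSP (μ : Measure ℝ) : Prop :=
  ∀ A : Set ℝ, MeasurableSet A → 0 < μ A → ∃ ε > 0, Set.Ioo (-ε) ε ⊆ A - A

theorem not_SP_of_translates_measure_tendsto_zero (μ : Measure ℝ)
    (A : Set ℝ) (hA : MeasurableSet A) (hpos : 0 < μ A)
    (t : ℕ → ℝ) (ht0 : ∀ n, t n ≠ 0) (ht : Tendsto t atTop (nhds 0))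
    (hμt : Tendsto (fun n => μ ((fun a => a + t n) '' A)) atTop (nhds 0)) :
    ¬ HasSP μ := by
  intro hSP
  set r : ℝ≥0∞ := min (μ A) 1 with hr
  have hr0 : 0 < r := lt_min hpos one_pos
  have hrtop : r ≠ ⊤ := ne_top_of_le_ne_top ENNReal.one_ne_top (min_le_right _ _)
  have hsel : ∀ k : ℕ, ∃ n, μ ((fun a => a + t n) '' A) < r * 2⁻¹ ^ (k + 2) ∧
      t n ∈ Set.Ioo (-(1 / (k + 1 : ℝ))) (1 / (k + 1 : ℝ)) := by
    intro k
    have hc : (0 : ℝ≥0∞) < r * 2⁻¹ ^ (k + 2) := by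
      exact ENNReal.mul_pos hr0.ne' (pow_ne_zero _ (by norm_num))
    have h1 : ∀ᶠ n in atTop, μ ((fun a => a + t n) '' A) < r * 2⁻¹ ^ (k + 2) :=
      hμt.eventually_lt_const hc
    have hδ : (0 : ℝ) < 1 / (k + 1 : ℝ) := by positivity
    have h2 : ∀ᶠ n in atTop, t n ∈ Set.Ioo (-(1 / (k + 1 : ℝ))) (1 / (k + 1 : ℝ)) :=
      ht (Ioo_mem_nhds (by linarith) hδ)
    exact (h1.and h2).exists
  choose f hf1 hf2 using hsel
  set B : Set ℝ := A \ ⋃ k, (fun a => a + t (f k)) '' A with hB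
  have himg : ∀ c : ℝ, (fun a => a + c) '' A = (fun a => a + -c) ⁻¹' A := by
    intro c
    ext x
    constructor
    · rintro ⟨y, hy, rfl⟩; simpa using hy
    · intro h; exact ⟨x + -c, h, by ring⟩
  have hBmeas : MeasurableSet B := by
    apply hA.diff
    apply MeasurableSet.iUnion
    intro k
    rw [himg]
    exact (measurable_add_const _) hA
  have hBpos : 0 < μ B := by
    by_contra h
    push_neg at h
    have hB0 : μ B = 0 := le_antisymm h zero_le
    have hsub : A ⊆ B ∪ ⋃ k, (fun a => a + t (f k)) '' A := by
      intro x hx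
      by_cases hx2 : x ∈ ⋃ k, (fun a => a + t (f k)) '' A
      · exact Or.inr hx2
      · exact Or.inl ⟨hx, hx2⟩
    have h1 : μ A ≤ μ B + μ (⋃ k, (fun a => a + t (f k)) '' A) :=
      le_trans (measure_mono hsub) (measure_union_le _ _)
    have h2 : μ (⋃ k, (fun a => a + t (f k)) '' A) ≤ ∑' k, r * 2⁻¹ ^ (k + 2) :=
      le_trans (measure_iUnion_le _) (ENNReal.tsum_le_tsum fun k => (hf1 k).le)
    have h3 : ∑' (k : ℕ), r * 2⁻¹ ^ (k + 2) = r * 2⁻¹ := by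
      rw [ENNReal.tsum_mul_left]
      congr 1
      have : ∀ k : ℕ, (2⁻¹ : ℝ≥0∞) ^ (k + 2) = 2⁻¹ ^ 2 * 2⁻¹ ^ k := by
        intro k; rw [← pow_add]; ring_nf
      rw [tsum_congr this, ENNReal.tsum_mul_left, ENNReal.tsum_geometric]
      have h12 : (1 : ℝ≥0∞) - 2⁻¹ = 2⁻¹ := by
        rw [ENNReal.sub_eq_of_eq_add (by norm_num)]
        rw [ENNReal.inv_two_add_inv_two]
      rw [h12, inv_inv, show ((2:ℝ≥0∞)⁻¹)^2 = 2⁻¹ * 2⁻¹ by ring,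
        mul_assoc, ENNReal.inv_mul_cancel (by norm_num) (by norm_num), mul_one]
    have h4 : r * 2⁻¹ < r := by
      rw [show r * 2⁻¹ = r / 2 from rfl]
      exact ENNReal.half_lt_self hr0.ne' hrtop
    have : μ A < μ A := by
      calc μ A ≤ μ B + μ (⋃ k, (fun a => a + t (f k)) '' A) := h1
        _ ≤ 0 + r * 2⁻¹ := by rw [hB0]; exact add_le_add le_rfl (h2.trans h3.le)
        _ < r := by rwa [zero_add]
        _ ≤ μ A := min_le_left _ _
    exact lt_irrefl _ this
  obtain ⟨ε, hε, hsubset⟩ := hSP B hBmeas hBpos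
  obtain ⟨k, hk⟩ := exists_nat_one_div_lt hε
  have htmem : t (f k) ∈ Set.Ioo (-ε) ε := by
    have := hf2 k
    constructor
    · have : -(1 / (k + 1 : ℝ)) < t (f k) := (hf2 k).1
      push_cast at hk ⊢
      linarith
    · have : t (f k) < 1 / (k + 1 : ℝ) := (hf2 k).2
      push_cast at hk ⊢
      linarith
  have : t (f k) ∈ B - B := hsubset htmem
  obtain ⟨x, hx, y, hy, hxy⟩ := this
  have hyA : y ∈ A := hy.1
  have hxU : x ∈ ⋃ j, (fun a => a + t (f j)) '' A := by
    apply Set.mem_iUnion.2 ⟨k, _⟩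
    refine ⟨y, hyA, ?_⟩
    have hxy' : x - y = t (f k) := hxy
    show y + t (f k) = x
    linarith
  exact hx.2 hxU
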